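/- Let X be an n×p full column rank real matrix (n ≥ p) and y ∈ ℝⁿ. Let v₁ > v₀ > 0 and let W be a p×p diagonal matrix with entries in [0,1]. For k ∈ {0,1} let W^{(jk)} be W with its j-th diagonal entry replaced by k, let Σ^{(jk)} = (XᵀX + (1/v₀)I + (1/v₁ - 1/v₀)W^{(jk)})⁻¹, and μ^{(jk)} = Σ^{(jk)} Xᵀ y. Then yᵀX Σ^{(j1)} Xᵀy - yᵀX Σ^{(j0)} Xᵀy = (1/v₀ - 1/v₁) μ_j^{(j0)} μ_j^{(j1)}. -/

import Mathlib

open Matrix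

theorem collapsed_quadratic_diff {n p : ℕ} (hnp : p ≤ n)
    (X : Matrix (Fin n) (Fin p) ℝ) (hrank : X.rank = p) (y : Fin n → ℝ)
    (v0 v1 : ℝ) (hv0 : 0 < v0) (hv01 : v0 < v1)
    (w : Fin p → ℝ) (hw : ∀ i, w i ∈ Set.Icc (0 : ℝ) 1) (j : Fin p)
    (S0 S1 : Matrix (Fin p) (Fin p) ℝ)
    (hS0 : S0 = (Xᵀ * X + v0⁻¹ • (1 : Matrix (Fin p) (Fin p) ℝ)
        + (v1⁻¹ - v0⁻¹) • Matrix.diagonal (Function.update w j 0))⁻¹)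
    (hS1 : S1 = (Xᵀ * X + v0⁻¹ • (1 : Matrix (Fin p) (Fin p) ℝ)
        + (v1⁻¹ - v0⁻¹) • Matrix.diagonal (Function.update w j 1))⁻¹)
    (μ0 μ1 : Fin p → ℝ)
    (hμ0 : μ0 = S0 *ᵥ (Xᵀ *ᵥ y)) (hμ1 : μ1 = S1 *ᵥ (Xᵀ *ᵥ y)) :
    y ⬝ᵥ (X *ᵥ (S1 *ᵥ (Xᵀ *ᵥ y))) - y ⬝ᵥ (X *ᵥ (S0 *ᵥ (Xᵀ *ᵥ y)))
      = (v0⁻¹ - v1⁻¹) * μ0 j * μ1 j := by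
  have hv1 : (0:ℝ) < v1 := hv0.trans hv01
  set c : ℝ := v1⁻¹ - v0⁻¹ with hc
  have hcneg : c < 0 := by
    have h := inv_strictAnti₀ hv0 hv01
    simpa [hc] using sub_neg.2 h
  set A0 : Matrix (Fin p) (Fin p) ℝ :=
    Xᵀ * X + v0⁻¹ • (1 : Matrix (Fin p) (Fin p) ℝ)
      + c • Matrix.diagonal (Function.update w j 0) with hA0
  set A1 : Matrix (Fin p) (Fin p) ℝ :=
    Xᵀ * X + v0⁻¹ • (1 : Matrix (Fin p) (Fin p) ℝ)
      + c • Matrix.diagonal (Function.update w j 1) with hA1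
  -- positivity of diagonal entries
  have hdpos : ∀ (k : ℝ), k = 0 ∨ k = 1 → ∀ i,
      0 < v0⁻¹ + c * Function.update w j k i := by
    intro k hk i
    rcases eq_or_ne i j with rfl | hij
    · rcases hk with rfl | rfl
      · simpa [Function.update_self] using inv_pos.2 hv0
      · have h : v0⁻¹ + c * 1 = v1⁻¹ := by rw [hc]; ring
        simp only [Function.update_self]
        rw [h]
        exact inv_pos.2 hv1
    · rw [Function.update_of_ne hij]
      have h1 : w i ≤ 1 := (hw i).2
      have h0 : 0 ≤ w i := (hw i).1
      have key : v0⁻¹ + c * w i = v1⁻¹ + (v0⁻¹ - v1⁻¹) * (1 - w i) := by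
        rw [hc]; ring
      have hvv : v1⁻¹ ≤ v0⁻¹ := by
        have := hcneg; rw [hc] at this; linarith
      have h2 : 0 ≤ (v0⁻¹ - v1⁻¹) * (1 - w i) :=
        mul_nonneg (by linarith) (by linarith)
      rw [key]
      have := inv_pos.2 hv1
      linarith
  -- the matrices A0, A1 are positive definite
  have hXX : (Xᵀ * X).PosSemidef := by
    have := Matrix.posSemidef_conjTranspose_mul_self X
    simpa [Matrix.conjTranspose_eq_transpose_of_trivial] using this
  have hPD : ∀ (k : ℝ), k = 0 ∨ k = 1 →
      (Xᵀ * X + v0⁻¹ • (1 : Matrix (Fin p) (Fin p) ℝ)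
        + c • Matrix.diagonal (Function.update w j k)).PosDef := by
    intro k hk
    have hdiag : (v0⁻¹ • (1 : Matrix (Fin p) (Fin p) ℝ)
        + c • Matrix.diagonal (Function.update w j k))
        = Matrix.diagonal (fun i => v0⁻¹ + c * Function.update w j k i) := by
      rw [Matrix.smul_one_eq_diagonal, ← Matrix.diagonal_smul, ← Matrix.diagonal_add]
      congr 1
    rw [add_assoc, hdiag]
    exact Matrix.PosDef.posSemidef_add hXX (Matrix.PosDef.diagonal (hdpos k hk))
  have hPD0 : A0.PosDef := hPD 0 (Or.inl rfl)
  have hPD1 : A1.PosDef := hPD 1 (Or.inr rfl)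
  have hdet0 : IsUnit A0.det := hPD0.det_pos.ne'.isUnit
  have hdet1 : IsUnit A1.det := hPD1.det_pos.ne'.isUnit
  have hS0' : S0 = A0⁻¹ := hS0
  have hS1' : S1 = A1⁻¹ := hS1
  have hS0A0 : S0 * A0 = 1 := by rw [hS0']; exact Matrix.nonsing_inv_mul _ hdet0
  have hA1S1 : A1 * S1 = 1 := by rw [hS1']; exact Matrix.mul_nonsing_inv _ hdet1
  -- symmetry of S0
  have hS0symm : S0ᵀ = S0 := by
    have hA0symm : A0ᵀ = A0 := by
      have := hPD0.isHermitian
      simpa [Matrix.IsHermitian, Matrix.conjTranspose_eq_transpose_of_trivial] using this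
    rw [hS0', Matrix.transpose_nonsing_inv, hA0symm]
  -- key difference identity
  have hdiff : S1 - S0 = S0 * (A0 - A1) * S1 := by
    have : S0 * (A0 - A1) * S1 = S0 * A0 * S1 - S0 * (A1 * S1) := by
      noncomm_ring
    rw [this, hS0A0, hA1S1, Matrix.one_mul, Matrix.mul_one]
  have hA0A1 : A0 - A1 = Matrix.diagonal (Pi.single j (-c)) := by
    rw [hA0, hA1]
    have : Xᵀ * X + v0⁻¹ • (1 : Matrix (Fin p) (Fin p) ℝ)
          + c • Matrix.diagonal (Function.update w j 0)
        - (Xᵀ * X + v0⁻¹ • (1 : Matrix (Fin p) (Fin p) ℝ)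
          + c • Matrix.diagonal (Function.update w j 1))
        = c • Matrix.diagonal (Function.update w j 0)
          - c • Matrix.diagonal (Function.update w j 1) := by abel
    have h2 : (c • Function.update w j 0 : Fin p → ℝ) - c • Function.update w j 1
        = Pi.single j (-c) := by
      funext i
      rcases eq_or_ne i j with rfl | hij
      · simp [Function.update_self]
      · simp [Function.update_of_ne hij, Pi.single_eq_of_ne hij]
    rw [this, ← Matrix.diagonal_smul, ← Matrix.diagonal_smul, Matrix.diagonal_sub]
    exact congrArg Matrix.diagonal (by funext i; simpa using congrFun h2 i)
  -- rewrite the quadratic forms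
  set v : Fin p → ℝ := Xᵀ *ᵥ y with hv
  have hyX : ∀ u : Fin p → ℝ, y ⬝ᵥ (X *ᵥ u) = v ⬝ᵥ u := by
    intro u
    rw [Matrix.dotProduct_mulVec, hv, Matrix.mulVec_transpose]
  rw [hyX, hyX, ← hμ1, ← hμ0]
  have : v ⬝ᵥ μ1 - v ⬝ᵥ μ0 = v ⬝ᵥ ((S1 - S0) *ᵥ v) := by
    rw [Matrix.sub_mulVec, dotProduct_sub, hμ0, hμ1, hv]
  rw [this, hdiff, hA0A1]
  have hstep : (S0 * Matrix.diagonal (Pi.single j (-c)) * S1) *ᵥ v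
      = S0 *ᵥ (Matrix.diagonal (Pi.single j (-c)) *ᵥ μ1) := by
    rw [← Matrix.mulVec_mulVec, ← Matrix.mulVec_mulVec, hμ1, hv]
  rw [hstep]
  have hdmv : Matrix.diagonal (Pi.single j (-c)) *ᵥ μ1 = Pi.single j (-c * μ1 j) := by
    funext i
    rcases eq_or_ne i j with rfl | hij
    · simp [Matrix.mulVec_diagonal]
    · simp [Matrix.mulVec_diagonal, Pi.single_eq_of_ne hij]
  rw [hdmv, Matrix.mulVec_single]
  have hcol : MulOpposite.op (-c * μ1 j) • S0.col j = (fun i => S0 i j * (-c * μ1 j)) := by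
    funext i; simp [Matrix.col]
  have hfin : v ⬝ᵥ (fun i => S0 i j * (-c * μ1 j)) = (S0 *ᵥ v) j * (-c * μ1 j) := by
    simp only [dotProduct, Matrix.mulVec]
    rw [Finset.sum_mul]
    apply Finset.sum_congr rfl
    intro x _
    have hx : S0 j x = S0 x j := congrFun (congrFun hS0symm x) j
    rw [hx]
    ring
  rw [hcol, hfin, ← hμ0]
  rw [hc]
  ring
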